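/- Let B be a bialgebra over a field k, and let M be a left B-Hopf module (i.e., a left B-module and left B-comodule such that the comodule structure map ρ: M → B ⊗ M is B-linear, where B ⊗ M carries the tensor product module structure). Then the map B ⊗ M^coρ → M, b ⊗ m ↦ b·m, is an isomorphism of Hopf modules, where M^coρ = {m ∈ M | ρ(m) = 1 ⊗ m} is the space of coinvariants, and B ⊗ M^coρ carries the trivial Hopf module structure (b'·(b⊗v) = b'b⊗v, ρ(b⊗v) = Δ(b)⊗v). The inverse is m ↦ ∑ m₍₋₁₎ ⊗ P(m₍₀₎) where P(m) = ∑ S(m₍₋₁₎)·m₍₀₎. -/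

import Mathlib

open TensorProduct

variable (k : Type*) [Field k]
variable (B : Type*) [Ring B] [HopfAlgebra k B]
variable (M : Type*) [AddCommGroup M] [Module k M] [Module B M]
  [IsScalarTower k B M] [SMulCommClass k B M]

/-- The `k`-linear action map `B ⊗ M → M`, `b ⊗ m ↦ b • m`. -/
noncomputable def smulLin : B ⊗[k] M →ₗ[k] M :=
  TensorProduct.lift (LinearMap.mk₂ k (fun (b : B) (m : M) => b • m)
    (fun b b' m => add_smul b b' m) (fun c b m => smul_assoc c b m)
    (fun b m m' => smul_add b m m') (fun c b m => (smul_comm c b m).symm))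

/-- The diagonal action of `B ⊗ B` on `B ⊗ M`:
`(b₁ ⊗ b₂) ⊗ (b' ⊗ m) ↦ (b₁ b') ⊗ (b₂ • m)`. -/
noncomputable def diagAct : (B ⊗[k] B) ⊗[k] (B ⊗[k] M) →ₗ[k] B ⊗[k] M :=
  (TensorProduct.map (LinearMap.mul' k B) (smulLin k B M)) ∘ₗ
    (TensorProduct.tensorTensorTensorComm k B B B M).toLinearMap


section ConvAux
open Coalgebra LinearMap
variable {k : Type*} [Field k] {B : Type*} [Ring B] [HopfAlgebra k B]
variable {C : Type*} [Ring C] [Algebra k C]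

variable {k : Type*} [Field k] {B : Type*} [Ring B] [HopfAlgebra k B]
variable {C : Type*} [Ring C] [Algebra k C]

/-- Convolution product on `Hom_k(B, C)`. -/
noncomputable def conv (f g : B →ₗ[k] C) : B →ₗ[k] C :=
  LinearMap.mul' k C ∘ₗ TensorProduct.map f g ∘ₗ Coalgebra.comul

lemma conv_repr (f g : B →ₗ[k] C) {b : B} {ι : Type*} (r : Coalgebra.Repr k b ι) :
    conv f g b = ∑ i ∈ r.index, f (r.left i) * g (r.right i) := by
  simp only [conv, LinearMap.comp_apply, ← r.eq, map_sum, TensorProduct.map_tmul,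
    LinearMap.mul'_apply]

lemma conv_assoc (f g h : B →ₗ[k] C) : conv (conv f g) h = conv f (conv g h) := by
  ext b
  set r := ℛ k b with hr
  let a₁ : ∀ i, Coalgebra.Repr k (r.left i) (B × B) := fun i => ℛ k (r.left i)
  let a₂ : ∀ i, Coalgebra.Repr k (r.right i) (B × B) := fun i => ℛ k (r.right i)
  have key := Coalgebra.sum_map_tmul_tmul_eq (R := k) f g h b (repr := r) (a₁ := a₁) (a₂ := a₂)
  apply_fun (LinearMap.mul' k C ∘ₗ (LinearMap.mul' k C).lTensor C) at key
  simp only [map_sum, LinearMap.comp_apply, LinearMap.lTensor_tmul, LinearMap.mul'_apply] at key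
  rw [conv_repr (conv f g) h r, conv_repr f (conv g h) r]
  calc ∑ i ∈ r.index, conv f g (r.left i) * h (r.right i)
      = ∑ i ∈ r.index, ∑ j ∈ (a₁ i).index,
          f ((a₁ i).left j) * (g ((a₁ i).right j) * h (r.right i)) := by
        refine Finset.sum_congr rfl fun i _ => ?_
        rw [conv_repr f g (a₁ i), Finset.sum_mul]
        exact Finset.sum_congr rfl fun j _ => mul_assoc _ _ _
    _ = ∑ i ∈ r.index, ∑ j ∈ (a₂ i).index,
          f (r.left i) * (g ((a₂ i).left j) * h ((a₂ i).right j)) := key.symm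
    _ = ∑ i ∈ r.index, f (r.left i) * conv g h (r.right i) := by
        refine Finset.sum_congr rfl fun i _ => ?_
        rw [conv_repr g h (a₂ i), Finset.mul_sum]

/-- The unit for convolution. -/
noncomputable def cunit : B →ₗ[k] C :=
  Algebra.linearMap k C ∘ₗ Coalgebra.counit

lemma conv_cunit_left (f : B →ₗ[k] C) : conv cunit f = f := by
  ext b
  have key := congrArg (TensorProduct.lid k C) (Coalgebra.sum_counit_tmul_map_eq f b
    (repr := ℛ k b))
  simp only [map_sum, TensorProduct.lid_tmul, one_smul] at key
  rw [conv_repr cunit f (ℛ k b)]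
  simp only [cunit, LinearMap.comp_apply, Algebra.linearMap_apply]
  calc ∑ i ∈ (ℛ k b).index, algebraMap k C (Coalgebra.counit ((ℛ k b).left i)) * f ((ℛ k b).right i)
      = ∑ i ∈ (ℛ k b).index, Coalgebra.counit (R := k) ((ℛ k b).left i) • f ((ℛ k b).right i) := by
        refine Finset.sum_congr rfl fun i _ => ?_
        rw [Algebra.smul_def]
    _ = f b := key

lemma conv_cunit_right (f : B →ₗ[k] C) : conv f cunit = f := by
  ext b
  have key := congrArg (TensorProduct.rid k C) (Coalgebra.sum_map_tmul_counit_eq f b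
    (repr := ℛ k b))
  simp only [map_sum, TensorProduct.rid_tmul, one_smul] at key
  rw [conv_repr f cunit (ℛ k b)]
  simp only [cunit, LinearMap.comp_apply, Algebra.linearMap_apply]
  calc ∑ i ∈ (ℛ k b).index, f ((ℛ k b).left i) * algebraMap k C (Coalgebra.counit ((ℛ k b).right i))
      = ∑ i ∈ (ℛ k b).index, Coalgebra.counit (R := k) ((ℛ k b).right i) • f ((ℛ k b).left i) := by
        refine Finset.sum_congr rfl fun i _ => ?_
        rw [Algebra.smul_def, Algebra.commutes]
    _ = f b := key

lemma conv_algHom (h : B →ₐ[k] C) (f g : B →ₗ[k] B) :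
    conv (h.toLinearMap ∘ₗ f) (h.toLinearMap ∘ₗ g) = h.toLinearMap ∘ₗ conv f g := by
  ext b
  rw [LinearMap.comp_apply, conv_repr (h.toLinearMap ∘ₗ f) (h.toLinearMap ∘ₗ g) (ℛ k b),
    conv_repr f g (ℛ k b), map_sum]
  exact Finset.sum_congr rfl fun i _ => by
    simp only [LinearMap.comp_apply, AlgHom.toLinearMap_apply, ← map_mul]

lemma algHom_comp_cunit (h : B →ₐ[k] C) :
    h.toLinearMap ∘ₗ (cunit : B →ₗ[k] B) = cunit := by
  ext b
  simp [cunit, AlgHom.commutes]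


end ConvAux

section HopfConv
open Coalgebra LinearMap
variable {k : Type*} [Field k] {B : Type*} [Ring B] [HopfAlgebra k B]

variable {k : Type*} [Field k] {B : Type*} [Ring B] [HopfAlgebra k B]

local notation "S" => HopfAlgebra.antipode (R := k) (A := B)
noncomputable abbrev incl₁ : B →ₗ[k] B ⊗[k] B :=
  (Algebra.TensorProduct.includeLeft : B →ₐ[k] B ⊗[k] B).toLinearMap
noncomputable abbrev incl₂ : B →ₗ[k] B ⊗[k] B :=
  (Algebra.TensorProduct.includeRight : B →ₐ[k] B ⊗[k] B).toLinearMap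

lemma conv_id_antipode : conv (LinearMap.id : B →ₗ[k] B) S = cunit := by
  have : TensorProduct.map (LinearMap.id : B →ₗ[k] B) S = LinearMap.lTensor B S := rfl
  rw [conv, this, HopfAlgebra.mul_antipode_lTensor_comul]; rfl

lemma conv_antipode_id : conv S (LinearMap.id : B →ₗ[k] B) = cunit := by
  have : TensorProduct.map S (LinearMap.id : B →ₗ[k] B) = LinearMap.rTensor B S := rfl
  rw [conv, this, HopfAlgebra.mul_antipode_rTensor_comul]; rfl

lemma comul_eq_conv : (Coalgebra.comul : B →ₗ[k] B ⊗[k] B) = conv incl₁ incl₂ := by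
  ext b
  rw [conv_repr incl₁ incl₂ (ℛ k b), ← (ℛ k b).eq]
  exact Finset.sum_congr rfl fun i _ => by
    simp [Algebra.TensorProduct.tmul_mul_tmul]

lemma conv_incl (h : B →ₐ[k] B ⊗[k] B) (f g : B →ₗ[k] B) :
    conv (h.toLinearMap ∘ₗ f) (h.toLinearMap ∘ₗ g) = h.toLinearMap ∘ₗ conv f g :=
  conv_algHom h f g

-- I := (ι₂ ∘ S) ⋆ (ι₁ ∘ S) is a two-sided convolution inverse of comul.
noncomputable def Iinv : B →ₗ[k] B ⊗[k] B := conv (incl₂ ∘ₗ S) (incl₁ ∘ₗ S)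

lemma incl₁_conv_S : conv (incl₁ : B →ₗ[k] B ⊗[k] B) (incl₁ ∘ₗ S) = cunit := by
  have := conv_algHom (Algebra.TensorProduct.includeLeft : B →ₐ[k] B ⊗[k] B) LinearMap.id S
  rw [LinearMap.comp_id] at this
  rw [this, conv_id_antipode, algHom_comp_cunit]

lemma S_conv_incl₁ : conv ((incl₁ : B →ₗ[k] B ⊗[k] B) ∘ₗ S) incl₁ = cunit := by
  have := conv_algHom (Algebra.TensorProduct.includeLeft : B →ₐ[k] B ⊗[k] B) S LinearMap.id
  rw [LinearMap.comp_id] at this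
  rw [this, conv_antipode_id, algHom_comp_cunit]

lemma incl₂_conv_S : conv (incl₂ : B →ₗ[k] B ⊗[k] B) (incl₂ ∘ₗ S) = cunit := by
  have := conv_algHom (Algebra.TensorProduct.includeRight : B →ₐ[k] B ⊗[k] B) LinearMap.id S
  rw [LinearMap.comp_id] at this
  rw [this, conv_id_antipode, algHom_comp_cunit]

lemma Iinv_conv_comul : conv (Iinv : B →ₗ[k] B ⊗[k] B) Coalgebra.comul = cunit := by
  rw [comul_eq_conv, Iinv, conv_assoc, ← conv_assoc (incl₁ ∘ₗ S) incl₁ incl₂,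
    S_conv_incl₁, conv_cunit_left]
  have := conv_algHom (Algebra.TensorProduct.includeRight : B →ₐ[k] B ⊗[k] B) S LinearMap.id
  rw [LinearMap.comp_id] at this
  rw [this, conv_antipode_id, algHom_comp_cunit]

lemma comul_conv_comulS :
    conv (Coalgebra.comul : B →ₗ[k] B ⊗[k] B) (Coalgebra.comul ∘ₗ S) = cunit := by
  have := conv_algHom (Bialgebra.comulAlgHom k B) LinearMap.id S
  rw [LinearMap.comp_id] at this
  have h2 : (Bialgebra.comulAlgHom k B).toLinearMap = (Coalgebra.comul : B →ₗ[k] B ⊗[k] B) := rfl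
  rw [h2] at this
  rw [this, conv_id_antipode]
  have := algHom_comp_cunit (Bialgebra.comulAlgHom k B)
  rwa [h2] at this

lemma comulS_eq_Iinv : (Coalgebra.comul ∘ₗ S : B →ₗ[k] B ⊗[k] B) = Iinv := by
  calc (Coalgebra.comul ∘ₗ S : B →ₗ[k] B ⊗[k] B)
      = conv cunit (Coalgebra.comul ∘ₗ S) := (conv_cunit_left _).symm
    _ = conv (conv Iinv Coalgebra.comul) (Coalgebra.comul ∘ₗ S) := by rw [Iinv_conv_comul]
    _ = conv Iinv (conv Coalgebra.comul (Coalgebra.comul ∘ₗ S)) := conv_assoc _ _ _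
    _ = conv Iinv cunit := by rw [comul_conv_comulS]
    _ = Iinv := conv_cunit_right _

/-- Key lemma: `(Δ ∘ S) ⋆ ι₁ = ι₂ ∘ S`. -/
lemma comulS_conv_incl₁ :
    conv (Coalgebra.comul ∘ₗ S : B →ₗ[k] B ⊗[k] B) incl₁ = incl₂ ∘ₗ S := by
  rw [comulS_eq_Iinv, Iinv, conv_assoc, S_conv_incl₁, conv_cunit_right]


end HopfConv

section ModuleAux
open Coalgebra LinearMap
variable (k : Type*) [Field k]
variable (B : Type*) [Ring B] [HopfAlgebra k B]
variable (M : Type*) [AddCommGroup M] [Module k M] [Module B M]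
  [IsScalarTower k B M] [SMulCommClass k B M]

lemma smulLin_tmul (b : B) (m : M) : smulLin k B M (b ⊗ₜ m) = b • m := rfl
lemma diagAct_tmul (a b c : B) (n : M) :
    diagAct k B M ((a ⊗ₜ b) ⊗ₜ (c ⊗ₜ n)) = (a * c) ⊗ₜ (b • n) := by
  simp [diagAct, smulLin_tmul]
noncomputable def zeta : (B ⊗[k] B) ⊗[k] M →ₗ[k] B ⊗[k] M :=
  (LinearMap.lTensor B (smulLin k B M)) ∘ₗ (TensorProduct.assoc k B B M).toLinearMap
lemma zeta_tmul (u v : B) (n : M) : zeta k B M ((u ⊗ₜ v) ⊗ₜ n) = u ⊗ₜ (v • n) := by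
  simp [zeta, smulLin_tmul]
noncomputable def actOn (v : M) : B →ₗ[k] M :=
  (smulLin k B M) ∘ₗ ((TensorProduct.mk k B M).flip v)

lemma actOn_apply (v : M) (b : B) : actOn k B M v b = b • v := rfl


lemma auxF (v : M) (w : B ⊗[k] B) :
    diagAct k B M (w ⊗ₜ ((1 : B) ⊗ₜ v)) = LinearMap.lTensor B (actOn k B M v) w := by
  induction w using TensorProduct.induction_on with
  | zero => simp [zero_tmul]
  | tmul x y => rw [diagAct_tmul, mul_one, lTensor_tmul, actOn_apply]
  | add x y hx hy => rw [add_tmul, map_add, hx, hy, map_add]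

lemma auxG (v : M) (w : B ⊗[k] B) :
    smulLin k B M (LinearMap.rTensor M (HopfAlgebra.antipode (R := k) (A := B))
        (LinearMap.lTensor B (actOn k B M v) w)) =
      actOn k B M v (LinearMap.mul' k B
        (LinearMap.rTensor B (HopfAlgebra.antipode (R := k) (A := B)) w)) := by
  induction w using TensorProduct.induction_on with
  | zero => simp
  | tmul x z =>
      rw [lTensor_tmul, rTensor_tmul, smulLin_tmul, actOn_apply, rTensor_tmul,
        mul'_apply, actOn_apply, mul_smul]
  | add x y hx hy => simp only [map_add, hx, hy]

lemma auxA (z : B ⊗[k] B) (y : B) (n : M) :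
    diagAct k B M (z ⊗ₜ (y ⊗ₜ n)) = zeta k B M ((z * (y ⊗ₜ (1 : B))) ⊗ₜ n) := by
  induction z using TensorProduct.induction_on with
  | zero => simp [zero_tmul]
  | tmul a b => rw [diagAct_tmul, Algebra.TensorProduct.tmul_mul_tmul, mul_one, zeta_tmul]
  | add x y hx hy => rw [add_tmul, map_add, hx, hy, add_mul, add_tmul, map_add]

local notation "S" => HopfAlgebra.antipode (R := k) (A := B)

lemma auxB (w : B ⊗[k] B) (n : M) :
    diagAct k B M (LinearMap.rTensor (B ⊗[k] M) (Coalgebra.comul ∘ₗ S)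
        ((TensorProduct.assoc k B B M) (w ⊗ₜ n))) =
      zeta k B M ((LinearMap.mul' k (B ⊗[k] B)
        ((TensorProduct.map (Coalgebra.comul ∘ₗ S) incl₁) w)) ⊗ₜ n) := by
  induction w using TensorProduct.induction_on with
  | zero => simp [zero_tmul]
  | tmul u v =>
      rw [TensorProduct.assoc_tmul, LinearMap.rTensor_tmul, TensorProduct.map_tmul,
        LinearMap.mul'_apply, LinearMap.comp_apply]
      exact auxA k B M _ v n
  | add x y hx hy =>
      simp only [add_tmul, map_add, hx, hy]

lemma auxC (x : B ⊗[k] M) :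
    diagAct k B M (LinearMap.rTensor (B ⊗[k] M) (Coalgebra.comul ∘ₗ S)
        ((TensorProduct.assoc k B B M)
          (LinearMap.rTensor M (Coalgebra.comul (R := k) (A := B)) x))) =
      (1 : B) ⊗ₜ smulLin k B M (LinearMap.rTensor M S x) := by
  induction x using TensorProduct.induction_on with
  | zero => simp
  | tmul b n =>
      rw [LinearMap.rTensor_tmul, auxB]
      have h : (LinearMap.mul' k (B ⊗[k] B))
          ((TensorProduct.map (Coalgebra.comul ∘ₗ S) incl₁) (Coalgebra.comul b)) =
          conv (Coalgebra.comul ∘ₗ S) (incl₁ : B →ₗ[k] B ⊗[k] B) b := rfl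
      rw [h, comulS_conv_incl₁]
      show zeta k B M (((1 : B) ⊗ₜ (S b)) ⊗ₜ n) = _
      rw [zeta_tmul, LinearMap.rTensor_tmul, smulLin_tmul]
  | add x y hx hy =>
      simp only [map_add, hx, hy, tmul_add]

lemma auxD1 (w : B ⊗[k] B) (n : M) :
    smulLin k B M (LinearMap.lTensor B (smulLin k B M ∘ₗ LinearMap.rTensor M S)
        ((TensorProduct.assoc k B B M) (w ⊗ₜ n))) =
      smulLin k B M ((LinearMap.mul' k B (LinearMap.lTensor B S w)) ⊗ₜ n) := by
  induction w using TensorProduct.induction_on with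
  | zero => simp [zero_tmul]
  | tmul x y =>
      rw [TensorProduct.assoc_tmul, LinearMap.lTensor_tmul, LinearMap.comp_apply,
        LinearMap.rTensor_tmul, smulLin_tmul, smulLin_tmul, LinearMap.lTensor_tmul,
        LinearMap.mul'_apply, smulLin_tmul, mul_smul]
  | add x y hx hy => simp only [add_tmul, map_add, hx, hy]

lemma auxD (x : B ⊗[k] M) :
    smulLin k B M (LinearMap.lTensor B (smulLin k B M ∘ₗ LinearMap.rTensor M S)
        ((TensorProduct.assoc k B B M)
          (LinearMap.rTensor M (Coalgebra.comul (R := k) (A := B)) x))) =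
      (TensorProduct.lid k M) (LinearMap.rTensor M (Coalgebra.counit (R := k) (A := B)) x) := by
  induction x using TensorProduct.induction_on with
  | zero => simp
  | tmul b n =>
      rw [LinearMap.rTensor_tmul, auxD1, HopfAlgebra.mul_antipode_lTensor_comul_apply,
        smulLin_tmul, LinearMap.rTensor_tmul, TensorProduct.lid_tmul, algebraMap_smul]
  | add x y hx hy => simp only [map_add, hx, hy]

end ModuleAux

/-- Fundamental theorem of Hopf modules. Let `B` be a Hopf algebra over `k` and `M` a
left `B`-Hopf module, i.e. a `B`-module and `B`-comodule with structure map
`ρ : M → B ⊗ M` (counital, coassociative) satisfying the compatibility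
`ρ(b·m) = ∑ b₍₁₎m₍₋₁₎ ⊗ b₍₂₎·m₍₀₎`. Then with `M^coρ = {m | ρ(m) = 1 ⊗ m}` the
coinvariants, the map `φ : B ⊗ M^coρ → M`, `b ⊗ m ↦ b·m` is bijective, it is a map of
Hopf modules for the trivial Hopf module structure on `B ⊗ M^coρ` (in particular
`b'·(b ⊗ v) ↦ b'·φ(b ⊗ v)`), and its inverse is `m ↦ ∑ m₍₋₁₎ ⊗ P(m₍₀₎)` where
`P(m) = ∑ S(m₍₋₁₎)·m₍₀₎`: indeed `P` lands in `M^coρ` and `∑ m₍₋₁₎ · P(m₍₀₎) = m`. -/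
theorem stmt5 (ρ : M →ₗ[k] B ⊗[k] M)
    (hcounit : ∀ m : M,
      (TensorProduct.lid k M)
        ((LinearMap.rTensor M (Coalgebra.counit (R := k) (A := B))) (ρ m)) = m)
    (hcoassoc : ∀ m : M,
      (LinearMap.rTensor M (Coalgebra.comul (R := k) (A := B))) (ρ m) =
        (TensorProduct.assoc k B B M).symm ((LinearMap.lTensor B ρ) (ρ m)))
    (hcompat : ∀ (b : B) (m : M),
      ρ (b • m) = diagAct k B M ((Coalgebra.comul (R := k) (A := B)) b ⊗ₜ ρ m)) :
    let coinv : Submodule k M :=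
      { carrier := {m : M | ρ m = (1 : B) ⊗ₜ m}
        add_mem' := fun ha hb => by
          simp only [Set.mem_setOf_eq] at *
          rw [map_add, ha, hb, TensorProduct.tmul_add]
        zero_mem' := by simp
        smul_mem' := fun c m hm => by
          simp only [Set.mem_setOf_eq] at *
          rw [map_smul, hm, TensorProduct.tmul_smul] }
    let φ : B ⊗[k] coinv →ₗ[k] M := (smulLin k B M) ∘ₗ (LinearMap.lTensor B coinv.subtype)
    let P : M →ₗ[k] M := (smulLin k B M) ∘ₗ
      (LinearMap.rTensor M (HopfAlgebra.antipode (R := k) (A := B))) ∘ₗ ρ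
    Function.Bijective φ ∧
      (∀ (b' b : B) (v : coinv), φ ((b' * b) ⊗ₜ v) = b' • φ (b ⊗ₜ v)) ∧
      (∀ m : M, P m ∈ coinv) ∧
      (∀ m : M, (smulLin k B M) ((LinearMap.lTensor B P) (ρ m)) = m) := by
  intro coinv φ P
  have hφ : ∀ (b : B) (v : coinv), φ (b ⊗ₜ v) = b • (v : M) := fun b v => rfl
  have hP : ∀ m : M, P m = smulLin k B M
      (LinearMap.rTensor M (HopfAlgebra.antipode (R := k) (A := B)) (ρ m)) := fun m => rfl
  -- compatibility, elementwise over B ⊗ M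
  have hρact : ∀ w : B ⊗[k] M, ρ (smulLin k B M w) =
      diagAct k B M ((TensorProduct.map (Coalgebra.comul (R := k) (A := B)) ρ) w) := by
    intro w
    induction w using TensorProduct.induction_on with
    | zero => simp
    | tmul b n => rw [smulLin_tmul, hcompat, TensorProduct.map_tmul]
    | add x y hx hy => simp only [map_add, hx, hy]
  -- comodule coassociativity, rearranged
  have h3 : ∀ m : M, LinearMap.lTensor B ρ (ρ m) =
      (TensorProduct.assoc k B B M)
        (LinearMap.rTensor M (Coalgebra.comul (R := k) (A := B)) (ρ m)) := by
    intro m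
    rw [hcoassoc m, LinearEquiv.apply_symm_apply]
  -- composite rewriting: map comul ρ ∘ rTensor S = rTensor (comul ∘ S) ∘ lTensor ρ
  have h2 : ∀ x : B ⊗[k] M,
      TensorProduct.map (Coalgebra.comul (R := k) (A := B)) ρ
        (LinearMap.rTensor M (HopfAlgebra.antipode (R := k) (A := B)) x) =
      LinearMap.rTensor (B ⊗[k] M)
        (Coalgebra.comul ∘ₗ HopfAlgebra.antipode (R := k) (A := B))
        (LinearMap.lTensor B ρ x) := by
    intro x
    induction x using TensorProduct.induction_on with
    | zero => simp
    | tmul b n => simp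
    | add x y hx hy => simp only [map_add, hx, hy]
  -- goal 3 : P lands in the coinvariants
  have goal3 : ∀ m : M, P m ∈ coinv := by
    intro m
    show ρ (P m) = (1 : B) ⊗ₜ P m
    rw [hP, hρact, h2, h3, auxC, ← hP]
  -- goal 4
  have goal4 : ∀ m : M, (smulLin k B M) ((LinearMap.lTensor B P) (ρ m)) = m := by
    intro m
    have hPdef : P = (smulLin k B M ∘ₗ
        LinearMap.rTensor M (HopfAlgebra.antipode (R := k) (A := B))) ∘ₗ ρ := rfl
    rw [hPdef, LinearMap.lTensor_comp, LinearMap.comp_apply, h3, auxD, hcounit]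
  -- goal 2
  have goal2 : ∀ (b' b : B) (v : coinv), φ ((b' * b) ⊗ₜ v) = b' • φ (b ⊗ₜ v) := by
    intro b' b v
    rw [hφ, hφ, mul_smul]
  -- structure maps for the inverse
  set Pc : M →ₗ[k] coinv := LinearMap.codRestrict coinv P goal3 with hPc
  set ψ : M →ₗ[k] B ⊗[k] coinv := LinearMap.lTensor B Pc ∘ₗ ρ with hψ
  have hρs : ∀ (b : B) (v : M), ρ v = (1 : B) ⊗ₜ v →
      ρ (b • v) = LinearMap.lTensor B (actOn k B M v) (Coalgebra.comul b) := by
    intro b v hv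
    rw [hcompat, hv, auxF]
  have hleft : ∀ m : M, φ (ψ m) = m := by
    intro m
    show smulLin k B M (LinearMap.lTensor B coinv.subtype (LinearMap.lTensor B Pc (ρ m))) = m
    rw [← LinearMap.comp_apply (LinearMap.lTensor B coinv.subtype),
      ← LinearMap.lTensor_comp, LinearMap.subtype_comp_codRestrict]
    exact goal4 m
  have hright : ∀ x : B ⊗[k] coinv, ψ (φ x) = x := by
    intro x
    induction x using TensorProduct.induction_on with
    | zero => simp
    | tmul b v =>
        rw [hφ]
        show LinearMap.lTensor B Pc (ρ (b • (v : M))) = b ⊗ₜ v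
        rw [hρs b v v.2, ← LinearMap.comp_apply, ← LinearMap.lTensor_comp]
        have hcomp : Pc ∘ₗ actOn k B M (v : M) =
            (LinearMap.toSpanSingleton k coinv v) ∘ₗ (Coalgebra.counit (R := k) (A := B)) := by
          ext y
          have key : P (y • (v : M)) = Coalgebra.counit (R := k) (A := B) y • (v : M) := by
            rw [hP, hρs y v v.2, auxG, HopfAlgebra.mul_antipode_rTensor_comul_apply,
              actOn_apply, algebraMap_smul]
          simp only [LinearMap.comp_apply, hPc, LinearMap.codRestrict_apply, actOn_apply,
            LinearMap.toSpanSingleton_apply, SetLike.val_smul, key]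
        rw [hcomp, LinearMap.lTensor_comp, LinearMap.comp_apply,
          Coalgebra.lTensor_counit_comul, LinearMap.lTensor_tmul,
          LinearMap.toSpanSingleton_apply, one_smul]
    | add x y hx hy => simp only [map_add, hx, hy]
  exact ⟨⟨Function.LeftInverse.injective hright, fun m => ⟨ψ m, hleft m⟩⟩, goal2, goal3, goal4⟩
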